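/- For every r ∈ ℕ with r ≥ 1, every n ∈ ℕ, and every x ∈ ℚ, the Changhee polynomial of order r satisfies Ch_n^{(r)}(x) = Σ_{m=0}^{n} S_1(n,m) · E_m^{(r)}(x), where S_1(n,m) are the signed Stirling numbers of the first kind and E_m^{(r)}(x) are the Euler polynomials of order r. -/

import Mathlib

/-- `log(1+t) = ∑_{n ≥ 1} (-1)^{n+1} t^n / n` as a formal power series over `ℚ`. -/
noncomputable def logOneAdd : PowerSeries ℚ :=
  PowerSeries.mk fun n => if n = 0 then 0 else (-1 : ℚ) ^ (n + 1) / n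

/-- `e^{xt} = ∑_{n ≥ 0} x^n t^n / n!` as a formal power series over `ℚ`. -/
noncomputable def expMul (x : ℚ) : PowerSeries ℚ :=
  PowerSeries.mk fun n => x ^ n / (n.factorial : ℚ)

/-- Formal composition `f(g(t))` of power series, intended for `g` with zero
constant term (then `coeff n (g^m) = 0` for `m > n`, so the sum below is the
full composition). -/
noncomputable def psComp (f g : PowerSeries ℚ) : PowerSeries ℚ :=
  PowerSeries.mk fun n =>
    ∑ m ∈ Finset.range (n + 1),
      PowerSeries.coeff m f * PowerSeries.coeff n (g ^ m)

/-- `(1+t)^x := exp (x · log(1+t))` as a formal power series over `ℚ`. -/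
noncomputable def onePlusPow (x : ℚ) : PowerSeries ℚ :=
  psComp (PowerSeries.exp ℚ) (x • logOneAdd)

/-- The falling factorial `(x)_n = x (x-1) ⋯ (x-n+1)`. -/
def fallFact (x : ℚ) (n : ℕ) : ℚ := ∏ i ∈ Finset.range n, (x - (i : ℚ))

open PowerSeries Finset

lemma coeff_pow_eq_zero {g : PowerSeries ℚ} (hg : constantCoeff g = 0)
    {k m : ℕ} (h : k < m) : coeff k (g ^ m) = 0 := by
  have hd : (X : ℚ⟦X⟧) ^ m ∣ g ^ m := pow_dvd_pow_of_dvd (X_dvd_iff.mpr hg) m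
  exact X_pow_dvd_iff.mp hd k h

lemma coeff_psComp (f g : PowerSeries ℚ) (n : ℕ) :
    coeff n (psComp f g) =
      ∑ m ∈ range (n + 1), coeff m f * coeff n (g ^ m) := by
  simp [psComp]

lemma coeff_psComp_of_lt {g : PowerSeries ℚ} (hg : constantCoeff g = 0)
    (f : PowerSeries ℚ) {n N : ℕ} (h : n < N) :
    coeff n (psComp f g) = ∑ m ∈ range N, coeff m f * coeff n (g ^ m) := by
  rw [coeff_psComp]
  refine Finset.sum_subset (range_subset_range.mpr h) ?_
  intro m hm hm'
  rw [coeff_pow_eq_zero hg (by simpa using hm'), mul_zero]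

lemma coeff_psComp_eval₂ {g : PowerSeries ℚ} (hg : constantCoeff g = 0)
    (f : PowerSeries ℚ) {n N : ℕ} (h : n < N) :
    coeff n (psComp f g) = coeff n (Polynomial.eval₂ C g (trunc N f)) := by
  have hdeg : (trunc N f).natDegree < N := by
    rcases eq_or_ne (trunc N f) 0 with h0 | h0
    · simp [h0]; omega
    · exact (Polynomial.natDegree_lt_iff_degree_lt h0).mpr (degree_trunc_lt f N)
  rw [coeff_psComp_of_lt hg f h, Polynomial.eval₂_eq_sum_range' C hdeg g]
  rw [map_sum]
  refine Finset.sum_congr rfl fun m hm => ?_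
  rw [coeff_C_mul, PowerSeries.coeff_trunc]
  simp [mem_range.mp hm]

lemma coeff_eval₂ {g : PowerSeries ℚ} (hg : constantCoeff g = 0)
    (q : Polynomial ℚ) (n : ℕ) :
    coeff n (q.eval₂ C g) =
      ∑ m ∈ range (n + 1), q.coeff m * coeff n (g ^ m) := by
  rw [Polynomial.eval₂_eq_sum_range' C q.natDegree.lt_succ_self g, map_sum]
  simp_rw [coeff_C_mul]
  rw [show (∑ i ∈ range (q.natDegree + 1), q.coeff i * coeff n (g ^ i))
      = ∑ i ∈ range (max (q.natDegree + 1) (n + 1)), q.coeff i * coeff n (g ^ i) from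
    Finset.sum_subset (range_subset_range.mpr (le_max_left _ _)) (fun m _ hm' => by
      rw [Polynomial.coeff_eq_zero_of_natDegree_lt (by simp at hm' ⊢; omega), zero_mul])]
  symm
  refine Finset.sum_subset (range_subset_range.mpr (le_max_right _ _)) fun m _ hm' => ?_
  rw [coeff_pow_eq_zero hg (by simp at hm'; omega), mul_zero]

lemma psComp_add (f₁ f₂ g : PowerSeries ℚ) :
    psComp (f₁ + f₂) g = psComp f₁ g + psComp f₂ g := by
  ext n
  simp [psComp, add_mul, Finset.sum_add_distrib]

lemma psComp_one (g : PowerSeries ℚ) : psComp 1 g = 1 := by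
  ext n
  rw [coeff_psComp]
  simp [PowerSeries.coeff_one]

lemma psComp_C (a : ℚ) (g : PowerSeries ℚ) : psComp (C a) g = C a := by
  ext n
  rw [coeff_psComp]
  simp [PowerSeries.coeff_C]

lemma psComp_mul {g : PowerSeries ℚ} (hg : constantCoeff g = 0)
    (f₁ f₂ : PowerSeries ℚ) :
    psComp (f₁ * f₂) g = psComp f₁ g * psComp f₂ g := by
  ext n
  rw [coeff_psComp_eval₂ hg (f₁ * f₂) n.lt_succ_self, PowerSeries.coeff_mul]
  have h1 : ∀ p ∈ Finset.HasAntidiagonal.antidiagonal n,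
      coeff p.1 (psComp f₁ g) * coeff p.2 (psComp f₂ g) =
      coeff p.1 ((trunc (n+1) f₁).eval₂ C g) *
      coeff p.2 ((trunc (n+1) f₂).eval₂ C g) := by
    intro p hp
    have := Finset.HasAntidiagonal.antidiagonal.fst_le hp
    have := Finset.HasAntidiagonal.antidiagonal.snd_le hp
    rw [coeff_psComp_eval₂ hg f₁ (N := n+1) (by omega), coeff_psComp_eval₂ hg f₂ (N := n+1) (by omega)]
  rw [Finset.sum_congr rfl h1, ← PowerSeries.coeff_mul, ← Polynomial.eval₂_mul]
  rw [coeff_eval₂ hg, coeff_eval₂ hg]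
  refine Finset.sum_congr rfl fun m hm => ?_
  have hmn : m < n + 1 := mem_range.mp hm
  rw [PowerSeries.coeff_trunc, if_pos hmn,
    coeff_mul_eq_coeff_trunc_mul_trunc f₁ f₂ hmn, ← Polynomial.coeff_coe, Polynomial.coe_mul]

lemma psComp_pow {g : PowerSeries ℚ} (hg : constantCoeff g = 0)
    (f : PowerSeries ℚ) (r : ℕ) : psComp (f ^ r) g = psComp f g ^ r := by
  induction r with
  | zero => simpa using psComp_one g
  | succ k ih => rw [pow_succ, pow_succ, psComp_mul hg, ih]

lemma constCoeff_log : constantCoeff logOneAdd = 0 := by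
  simp [logOneAdd]

lemma coeff_log_succ (n : ℕ) :
    coeff (n + 1) logOneAdd = (-1 : ℚ) ^ (n + 2) / (n + 1) := by
  simp [logOneAdd]

lemma deriv_log : (1 + X) * d⁄dX ℚ logOneAdd = 1 := by
  ext n
  rw [add_mul, one_mul, map_add]
  cases n with
  | zero =>
    have h0 : coeff 0 (X * d⁄dX ℚ logOneAdd) = 0 := by
      rw [PowerSeries.coeff_zero_eq_constantCoeff, map_mul, constantCoeff_X, zero_mul]
    rw [h0, coeff_derivative, coeff_log_succ, PowerSeries.coeff_one]
    norm_num
  | succ n =>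
    rw [PowerSeries.coeff_succ_X_mul, coeff_derivative, coeff_derivative,
      coeff_log_succ, coeff_log_succ, PowerSeries.coeff_one]
    have h1 : ((n : ℚ) + 1) ≠ 0 := by positivity
    have h2 : ((n : ℚ) + 1 + 1) ≠ 0 := by positivity
    field_simp
    ring_nf
    rw [if_neg (by omega)]

lemma key_rec (m n : ℕ) :
    ((n : ℚ) + 1) * coeff (n + 1) (logOneAdd ^ (m + 1))
      + (n : ℚ) * coeff n (logOneAdd ^ (m + 1))
      = ((m : ℚ) + 1) * coeff n (logOneAdd ^ m) := by
  have hB : (1 + X) * d⁄dX ℚ (logOneAdd ^ (m + 1))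
      = ((m : ℚ) + 1) • logOneAdd ^ m := by
    rw [Derivation.leibniz_pow]
    have : (m + 1) • logOneAdd ^ (m + 1 - 1) • d⁄dX ℚ logOneAdd
        = ((m : ℚ) + 1) • (logOneAdd ^ m * d⁄dX ℚ logOneAdd) := by
      simp only [smul_eq_mul, nsmul_eq_mul, Nat.add_sub_cancel,
        PowerSeries.smul_eq_C_mul, map_add, map_one, map_natCast]
      push_cast
      ring
    rw [this, mul_smul_comm]
    congr 1
    rw [show (1 + X) * (logOneAdd ^ m * d⁄dX ℚ logOneAdd)
        = logOneAdd ^ m * ((1 + X) * d⁄dX ℚ logOneAdd) by ring, deriv_log, mul_one]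
  have hc := congrArg (coeff n) hB
  rw [map_smul, smul_eq_mul, add_mul, one_mul, map_add] at hc
  cases n with
  | zero =>
    have h0 : coeff 0 (X * d⁄dX ℚ (logOneAdd ^ (m + 1))) = 0 := by
      rw [PowerSeries.coeff_zero_eq_constantCoeff, map_mul, constantCoeff_X, zero_mul]
    rw [h0, coeff_derivative] at hc
    push_cast
    simpa using hc
  | succ n =>
    rw [PowerSeries.coeff_succ_X_mul, coeff_derivative, coeff_derivative] at hc
    push_cast
    push_cast at hc
    linarith

noncomputable def uu (n : ℕ) : ℚ :=
  ∑ m ∈ range (n + 1), (Nat.factorial m : ℚ)⁻¹ * coeff n (logOneAdd ^ m)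

lemma c_diag_zero (n : ℕ) : coeff n (logOneAdd ^ (n + 1)) = 0 :=
  coeff_pow_eq_zero constCoeff_log n.lt_succ_self

lemma c_zero (n : ℕ) :
    coeff n (logOneAdd ^ 0) = if n = 0 then 1 else 0 := by
  rw [pow_zero, PowerSeries.coeff_one]

lemma uu_rec (n : ℕ) : ((n : ℚ) + 1) * uu (n + 1) = (1 - (n : ℚ)) * uu n := by
  have h1 : ((n : ℚ) + 1) * uu (n + 1)
      = ∑ m ∈ range (n + 2), (Nat.factorial m : ℚ)⁻¹
          * (((n : ℚ) + 1) * coeff (n + 1) (logOneAdd ^ m)) := by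
    rw [uu, Finset.mul_sum]
    exact Finset.sum_congr rfl fun m _ => by ring
  rw [h1, Finset.sum_range_succ']
  have h0 : (Nat.factorial 0 : ℚ)⁻¹
      * (((n : ℚ) + 1) * coeff (n + 1) (logOneAdd ^ 0)) = 0 := by
    rw [c_zero]
    simp
  rw [h0, add_zero]
  have h2 : ∀ i ∈ range (n + 1),
      (Nat.factorial (i + 1) : ℚ)⁻¹
          * (((n : ℚ) + 1) * coeff (n + 1) (logOneAdd ^ (i + 1)))
      = (Nat.factorial i : ℚ)⁻¹ * coeff n (logOneAdd ^ i)
        - (n : ℚ) * ((Nat.factorial (i + 1) : ℚ)⁻¹ * coeff n (logOneAdd ^ (i + 1))) := by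
    intro i _
    have hr := key_rec i n
    have heq : ((n : ℚ) + 1) * coeff (n + 1) (logOneAdd ^ (i + 1))
        = ((i : ℚ) + 1) * coeff n (logOneAdd ^ i)
          - (n : ℚ) * coeff n (logOneAdd ^ (i + 1)) := by linarith
    rw [heq]
    have hfact : (Nat.factorial (i + 1) : ℚ) = ((i : ℚ) + 1) * (Nat.factorial i : ℚ) := by
      rw [Nat.factorial_succ]
      push_cast
      ring
    have hi : ((i : ℚ) + 1) ≠ 0 := by positivity
    have hf : (Nat.factorial i : ℚ) ≠ 0 := Nat.cast_ne_zero.mpr i.factorial_ne_zero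
    rw [hfact]
    field_simp
  rw [Finset.sum_congr rfl h2, Finset.sum_sub_distrib]
  have h3 : ∑ i ∈ range (n + 1),
      (n : ℚ) * ((Nat.factorial (i + 1) : ℚ)⁻¹ * coeff n (logOneAdd ^ (i + 1)))
      = (n : ℚ) * (uu n - (if n = 0 then 1 else 0)) := by
    rw [← Finset.mul_sum]
    congr 1
    have hs := Finset.sum_range_succ'
      (fun m => (Nat.factorial m : ℚ)⁻¹ * coeff n (logOneAdd ^ m)) (n + 1)
    have hs2 : ∑ m ∈ range (n + 2),
        (Nat.factorial m : ℚ)⁻¹ * coeff n (logOneAdd ^ m) = uu n := by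
      rw [Finset.sum_range_succ, c_diag_zero, mul_zero, add_zero, uu]
    rw [hs2] at hs
    rw [c_zero] at hs
    simp only [Nat.factorial_zero, Nat.cast_one, inv_one, one_mul] at hs
    linarith [hs]
  rw [h3]
  show uu n - _ = _
  rcases Nat.eq_zero_or_pos n with h | h
  · subst h; simp
  · rw [if_neg (by omega)]
    ring

lemma uu_succ_succ (n : ℕ) : uu (n + 2) = 0 := by
  induction n with
  | zero =>
    have := uu_rec 1
    norm_num at this
    linarith
  | succ k ih =>
    have h := uu_rec (k + 2)
    rw [ih, mul_zero] at h
    have hne : (((k + 2 : ℕ) : ℚ) + 1) ≠ 0 := by positivity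
    exact (mul_eq_zero.mp h).resolve_left hne

lemma uu_zero : uu 0 = 1 := by
  rw [uu]
  simp [c_zero]

lemma uu_one : uu 1 = 1 := by
  have := uu_rec 0
  rw [uu_zero] at this
  norm_num at this
  exact this

lemma psComp_exp_log : psComp (PowerSeries.exp ℚ) logOneAdd = 1 + X := by
  ext n
  have hl : coeff n (psComp (PowerSeries.exp ℚ) logOneAdd) = uu n := by
    rw [coeff_psComp, uu]
    refine Finset.sum_congr rfl fun m _ => ?_
    rw [PowerSeries.coeff_exp]
    norm_num
  rw [hl, map_add, PowerSeries.coeff_one, PowerSeries.coeff_X]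
  match n with
  | 0 => rw [uu_zero]; norm_num
  | 1 => rw [uu_one]; norm_num
  | (k + 2) =>
    rw [uu_succ_succ, if_neg (by omega), if_neg (by omega), add_zero]

lemma psComp_expMul (x : ℚ) : psComp (expMul x) logOneAdd = onePlusPow x := by
  ext n
  rw [onePlusPow, coeff_psComp, coeff_psComp]
  refine Finset.sum_congr rfl fun m _ => ?_
  rw [smul_pow, map_smul, smul_eq_mul, PowerSeries.coeff_exp, expMul, coeff_mk]
  simp only [Algebra.algebraMap_self_apply]
  ring

lemma psComp_two (g : PowerSeries ℚ) : psComp 2 g = 2 := by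
  rw [show (2 : PowerSeries ℚ) = C 2 from (map_ofNat _ 2).symm, psComp_C]

theorem changhee_eq_stirling_sum_euler
    (r : ℕ) (hr : 1 ≤ r) (x : ℚ) (Ch E : ℕ → ℚ) (S1 : ℕ → ℕ → ℚ)
    (hCh : (2 : PowerSeries ℚ) ^ r * onePlusPow x =
      (PowerSeries.X + 2) ^ r * (PowerSeries.mk fun k => Ch k / (k.factorial : ℚ)))
    (hE : (2 : PowerSeries ℚ) ^ r * expMul x =
      (PowerSeries.exp ℚ + 1) ^ r * (PowerSeries.mk fun k => E k / (k.factorial : ℚ)))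
    (hS1 : ∀ m, logOneAdd ^ m =
      (m.factorial : ℚ) • (PowerSeries.mk fun k => S1 k m / (k.factorial : ℚ))) :
    ∀ n, Ch n = ∑ m ∈ Finset.range (n + 1), S1 n m * E m := by
  have hg := constCoeff_log
  set F : PowerSeries ℚ := PowerSeries.mk fun k => Ch k / (k.factorial : ℚ) with hF
  set G : PowerSeries ℚ := PowerSeries.mk fun k => E k / (k.factorial : ℚ) with hG
  have hcomp : psComp ((PowerSeries.exp ℚ + 1) ^ r * G) logOneAdd
      = psComp ((2 : PowerSeries ℚ) ^ r * expMul x) logOneAdd := by rw [hE]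
  rw [psComp_mul hg, psComp_mul hg, psComp_pow hg, psComp_pow hg,
    psComp_add, psComp_exp_log, psComp_one, psComp_two, psComp_expMul, hCh] at hcomp
  have hXne : ((1 : PowerSeries ℚ) + X + 1) ^ r = (X + 2 : PowerSeries ℚ) ^ r := by
    ring
  rw [hXne] at hcomp
  have hne : ((X + 2 : PowerSeries ℚ)) ^ r ≠ 0 := by
    apply pow_ne_zero
    intro h
    have h2 := congrArg (constantCoeff) h
    rw [map_add, constantCoeff_X, map_zero] at h2
    rw [map_ofNat] at h2
    norm_num at h2
  have hFG : psComp G logOneAdd = F := mul_left_cancel₀ hne hcomp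
  intro n
  have hcoeff := congrArg (coeff n) hFG
  rw [coeff_psComp, hF, coeff_mk] at hcoeff
  have hterm : ∀ m ∈ range (n + 1),
      coeff m G * coeff n (logOneAdd ^ m)
        = S1 n m * E m / (n.factorial : ℚ) := by
    intro m _
    rw [hG, coeff_mk, hS1 m, map_smul, smul_eq_mul, coeff_mk]
    have hm : (m.factorial : ℚ) ≠ 0 := Nat.cast_ne_zero.mpr m.factorial_ne_zero
    field_simp
  rw [Finset.sum_congr rfl hterm, ← Finset.sum_div] at hcoeff
  have hn : (n.factorial : ℚ) ≠ 0 := Nat.cast_ne_zero.mpr n.factorial_ne_zero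
  have h2 := (div_eq_div_iff hn hn).mp hcoeff
  exact (mul_right_cancel₀ hn h2).symm
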